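/- For all constants C0, C1, C2 ≥ 1 and L > 0 there exists a constant D = D(C0, C1, C2, L) with the following property. Let M be a nonempty finite set endowed with two metrics d0 and d1 and let r : M → (0,∞) satisfy, for all x,y ∈ M, |d0(x,y) − d1(x,y)| ≤ r(x) + r(y), |r(x) − r(y)| ≤ d0(x,y) + d1(x,y), and additionally |r(x) − r(y)| ≤ L·min{d0(x,y), d1(x,y)}. Define h(x,y) = min{d0(x,y), d1(x,y)} and, for i = 0,1, g_i(x,y) = min{d_i(x,y), r(x) + r(y)}. If c1(M, g_0) ≤ C0, c1(M, g_1) ≤ C1, and c1(M, h) ≤ C2, then the generalized twisted union (M × {0,1}, d) of (M,d0) and (M,d1) with joining function r embeds into L1 with distortion at most D. -/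

import Mathlib

open MeasureTheory
open scoped ENNReal NNReal

/-- `d` is a metric on `M`. -/
def IsMetric {M : Type*} (d : M → M → ℝ) : Prop :=
  (∀ x, d x x = 0) ∧ (∀ x y, x ≠ y → 0 < d x y) ∧
  (∀ x y, d x y = d y x) ∧ (∀ x y z, d x z ≤ d x y + d y z)

/-- `(M, f)` embeds into (some) `L₁` with distortion at most `K`, in the
generalized sense allowing `f` to be an arbitrary nonnegative function. -/
def EmbedsL1 {M : Type*} (f : M → M → ℝ) (K : ℝ) : Prop :=
  ∃ (Ω : Type) (_ : MeasurableSpace Ω) (μ : Measure Ω) (Ψ : M → Lp ℝ 1 μ),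
    ∀ x y, f x y ≤ ‖Ψ x - Ψ y‖ ∧ ‖Ψ x - Ψ y‖ ≤ K * f x y

/-- The metric of the (generalized) twisted union of `(M, d0)` and `(M, d1)`
with joining function `r`, realized on `M × Bool` (`false` plays the role of
`0` and `true` the role of `1`). -/
noncomputable def twistedDist {M : Type*} (d0 d1 : M → M → ℝ) (r : M → ℝ) :
    M × Bool → M × Bool → ℝ
  | (x, false), (y, false) => d0 x y
  | (x, true),  (y, true)  => d1 x y
  | (x, false), (y, true)  => ⨅ z : M, d0 x z + d1 z y + r z
  | (x, true),  (y, false) => ⨅ z : M, d0 y z + d1 z x + r z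

lemma glue_exists {Ω₁ Ω₂ : Type} [MeasurableSpace Ω₁] [MeasurableSpace Ω₂]
    (μ₁ : Measure Ω₁) (μ₂ : Measure Ω₂) :
    ∃ (Ω : Type) (_ : MeasurableSpace Ω) (μ : Measure Ω)
      (T : Lp ℝ 1 μ₁ → Lp ℝ 1 μ₂ → Lp ℝ 1 μ),
      ∀ a c b d, ‖T a b - T c d‖ = ‖a - c‖ + ‖b - d‖ := by
  classical
  set ν : Measure (Ω₁ ⊕ Ω₂) := μ₁.map Sum.inl + μ₂.map Sum.inr with hν
  have key : ∀ (f₁ : Ω₁ → ℝ) (f₂ : Ω₂ → ℝ), Measurable f₁ → Measurable f₂ →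
      eLpNorm (Sum.elim f₁ f₂) 1 ν = eLpNorm f₁ 1 μ₁ + eLpNorm f₂ 1 μ₂ := by
    intro f₁ f₂ h₁ h₂
    have hm : Measurable (Sum.elim f₁ f₂) := h₁.sumElim h₂
    have hi : Measurable fun ω => ‖Sum.elim f₁ f₂ ω‖ₑ := hm.enorm
    rw [eLpNorm_one_eq_lintegral_enorm, eLpNorm_one_eq_lintegral_enorm,
      eLpNorm_one_eq_lintegral_enorm, hν, lintegral_add_measure,
      lintegral_map hi measurable_inl, lintegral_map hi measurable_inr]
    simp
  have mem : ∀ (f : Lp ℝ 1 μ₁) (g : Lp ℝ 1 μ₂), MemLp (Sum.elim ⇑f ⇑g) 1 ν := by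
    intro f g
    refine ⟨(((Lp.stronglyMeasurable f).measurable.sumElim
      (Lp.stronglyMeasurable g).measurable)).aestronglyMeasurable, ?_⟩
    rw [key _ _ (Lp.stronglyMeasurable f).measurable (Lp.stronglyMeasurable g).measurable]
    exact ENNReal.add_lt_top.2 ⟨Lp.eLpNorm_lt_top f, Lp.eLpNorm_lt_top g⟩
  refine ⟨Ω₁ ⊕ Ω₂, inferInstance, ν, fun f g => (mem f g).toLp _, ?_⟩
  intro a c b d
  have h1 : (⇑(((mem a b).toLp _) - ((mem c d).toLp _)) : Ω₁ ⊕ Ω₂ → ℝ) =ᵐ[ν]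
      Sum.elim (⇑a - ⇑c) (⇑b - ⇑d) := by
    filter_upwards [Lp.coeFn_sub ((mem a b).toLp _) ((mem c d).toLp _),
      (mem a b).coeFn_toLp, (mem c d).coeFn_toLp] with ω hw hab hcd
    rw [hw]
    simp only [Pi.sub_apply, hab, hcd]
    cases ω <;> rfl
  have hk := key (⇑a - ⇑c) (⇑b - ⇑d)
    ((Lp.stronglyMeasurable a).measurable.sub (Lp.stronglyMeasurable c).measurable)
    ((Lp.stronglyMeasurable b).measurable.sub (Lp.stronglyMeasurable d).measurable)
  rw [Lp.norm_def, eLpNorm_congr_ae h1, hk,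
    show eLpNorm (⇑a - ⇑c) 1 μ₁ = eLpNorm (⇑(a - c)) 1 μ₁ from
      (eLpNorm_congr_ae (Lp.coeFn_sub a c)).symm,
    show eLpNorm (⇑b - ⇑d) 1 μ₂ = eLpNorm (⇑(b - d)) 1 μ₂ from
      (eLpNorm_congr_ae (Lp.coeFn_sub b d)).symm,
    ENNReal.toReal_add (Lp.eLpNorm_ne_top _) (Lp.eLpNorm_ne_top _), ← Lp.norm_def, ← Lp.norm_def]

lemma bool_glue_exists :
    ∃ (T : ℝ → ℝ → Lp ℝ 1 (Measure.count : Measure Bool)),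
      ∀ a c b d, ‖T a b - T c d‖ = |a - c| + |b - d| := by
  classical
  have key : ∀ f : Bool → ℝ, eLpNorm f 1 (Measure.count : Measure Bool)
      = (‖f false‖₊ : ℝ≥0∞) + ‖f true‖₊ := by
    intro f
    rw [eLpNorm_one_eq_lintegral_enorm, lintegral_count, tsum_fintype]
    simp [add_comm, enorm_eq_nnnorm]
  have mem : ∀ x y : ℝ, MemLp (fun t => cond t y x) 1 (Measure.count : Measure Bool) := by
    intro x y
    refine ⟨(Measurable.of_discrete).aestronglyMeasurable, ?_⟩
    rw [key]
    exact ENNReal.add_lt_top.2 ⟨ENNReal.coe_lt_top, ENNReal.coe_lt_top⟩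
  refine ⟨fun x y => (mem x y).toLp _, ?_⟩
  intro a c b d
  have h1 : (⇑(((mem a b).toLp _) - ((mem c d).toLp _)) : Bool → ℝ) =ᵐ[Measure.count]
      fun t => cond t (b - d) (a - c) := by
    filter_upwards [Lp.coeFn_sub ((mem a b).toLp _) ((mem c d).toLp _),
      (mem a b).coeFn_toLp, (mem c d).coeFn_toLp] with t hw hab hcd
    rw [hw]
    simp only [Pi.sub_apply, hab, hcd]
    cases t <;> rfl
  rw [Lp.norm_def, eLpNorm_congr_ae h1, key]
  push_cast [ENNReal.toReal_add ENNReal.coe_ne_top ENNReal.coe_ne_top]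
  simp [Real.norm_eq_abs]

set_option maxHeartbeats 1000000 in
/-- Theorem 5.1: `L₁`-embeddability of generalized twisted unions when the
joining function `r` is Lipschitz with respect to both metrics. -/
theorem generalized_twisted_union_embeds_L1_lipschitz_r
    (C0 C1 C2 : ℝ) (hC0 : 1 ≤ C0) (hC1 : 1 ≤ C1) (hC2 : 1 ≤ C2)
    (L : ℝ) (hL : 0 < L) :
    ∃ D : ℝ,
      ∀ (M : Type) [Fintype M] [Nonempty M]
        (d0 d1 : M → M → ℝ) (r : M → ℝ),
        (∀ x, 0 < r x) →
        IsMetric d0 → IsMetric d1 →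
        (∀ x y, |d0 x y - d1 x y| ≤ r x + r y) →
        (∀ x y, |r x - r y| ≤ d0 x y + d1 x y) →
        (∀ x y, |r x - r y| ≤ L * min (d0 x y) (d1 x y)) →
        EmbedsL1 (fun x y => min (d0 x y) (r x + r y)) C0 →
        EmbedsL1 (fun x y => min (d1 x y) (r x + r y)) C1 →
        EmbedsL1 (fun x y => min (d0 x y) (d1 x y)) C2 →
        EmbedsL1 (twistedDist d0 d1 r) D := by
  classical
  have hC0n : (0:ℝ) ≤ C0 := by linarith
  have hC1n : (0:ℝ) ≤ C1 := by linarith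
  have hC2n : (0:ℝ) ≤ C2 := by linarith
  set D : ℝ := (2*C0 + 2*C1 + C2 + 2) * (3*L + 6) with hD
  have hD1 : C0 + C2 + L ≤ D := by
    nlinarith [mul_nonneg hC0n hL.le, mul_nonneg hC1n hL.le, mul_nonneg hC2n hL.le]
  have hD2 : C1 + C2 + L ≤ D := by
    nlinarith [mul_nonneg hC0n hL.le, mul_nonneg hC1n hL.le, mul_nonneg hC2n hL.le]
  have hD3 : C2*(L+2) + (2*C0+1)*(L+1) + (2*C1+1)*(L+1) ≤ D := by
    nlinarith [mul_nonneg hC0n hL.le, mul_nonneg hC1n hL.le, mul_nonneg hC2n hL.le]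
  refine ⟨D, ?_⟩
  intro M _ _ d0 d1 r hr hm0 hm1 hdd hrd hrL h0 h1 h2
  obtain ⟨Ω0, m0, μ0, Ψ0, hΨ0⟩ := h0
  obtain ⟨Ω1, m1, μ1, Ψ1, hΨ1⟩ := h1
  obtain ⟨Ω2, m2, μ2, Ψh, hΨh⟩ := h2
  obtain ⟨hm00, hm0pos, hm0symm, hm0tri⟩ := hm0
  obtain ⟨hm10, hm1pos, hm1symm, hm1tri⟩ := hm1
  have hd0nn : ∀ x y, 0 ≤ d0 x y := by
    intro x y
    by_cases hxy : x = y
    · subst hxy; simp [hm00 x]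
    · exact (hm0pos x y hxy).le
  have hd1nn : ∀ x y, 0 ≤ d1 x y := by
    intro x y
    by_cases hxy : x = y
    · subst hxy; simp [hm10 x]
    · exact (hm1pos x y hxy).le
  obtain ⟨xs, hxs⟩ := Finite.exists_min r
  obtain ⟨ΩA, mA, νA, T1, hT1⟩ := glue_exists μ2 μ0
  obtain ⟨ΩB, mB, νB, T2, hT2⟩ := glue_exists νA μ1
  obtain ⟨ΩC, mC, νC, T3, hT3⟩ := glue_exists νB (Measure.count : Measure Bool)
  obtain ⟨TB, hTB⟩ := bool_glue_exists
  set B0 : M × Bool → Lp ℝ 1 μ0 := fun p => cond p.2 (Ψ0 xs) (Ψ0 p.1) with hB0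
  set B1 : M × Bool → Lp ℝ 1 μ1 := fun p => cond p.2 (Ψ1 p.1) (Ψ1 xs) with hB1
  set u1 : M × Bool → ℝ := fun p => cond p.2 0 (r p.1) with hu1
  set u2 : M × Bool → ℝ := fun p => cond p.2 (r p.1) 0 with hu2
  set Φ : M × Bool → Lp ℝ 1 νC :=
    fun p => T3 (T2 (T1 (Ψh p.1) (B0 p)) (B1 p)) (TB (u1 p) (u2 p)) with hΦ
  have hnorm : ∀ p q, ‖Φ p - Φ q‖ =
      ‖Ψh p.1 - Ψh q.1‖ + ‖B0 p - B0 q‖ + ‖B1 p - B1 q‖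
        + (|u1 p - u1 q| + |u2 p - u2 q|) := by
    intro p q
    simp only [hΦ]
    rw [hT3, hT2, hT1, hTB]
  -- the cross-case estimates
  have cross : ∀ x y : M,
      (⨅ z : M, d0 x z + d1 z y + r z) ≤ ‖Φ (x, false) - Φ (y, true)‖ ∧
      ‖Φ (x, false) - Φ (y, true)‖ ≤ D * (⨅ z : M, d0 x z + d1 z y + r z) := by
    intro x y
    set I : ℝ := ⨅ z : M, d0 x z + d1 z y + r z with hIdef
    have hbdd : BddBelow (Set.range fun z : M => d0 x z + d1 z y + r z) :=
      (Set.finite_range _).bddBelow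
    have hInn : 0 ≤ I :=
      le_ciInf fun z => add_nonneg (add_nonneg (hd0nn x z) (hd1nn z y)) (hr z).le
    have hIub : I ≤ min (d0 x y) (d1 x y) + (r x + r y) := by
      rcases le_total (d0 x y) (d1 x y) with hc | hc
      · have hz := ciInf_le hbdd y
        rw [min_eq_left hc]
        have h11 : d1 y y = 0 := hm10 y
        linarith [(hr x).le]
      · have hz := ciInf_le hbdd x
        rw [min_eq_right hc]
        have h00 : d0 x x = 0 := hm00 x
        linarith [(hr y).le]
    have hLpos : (0:ℝ) < L + 1 := by linarith
    have hrx : r x ≤ (L + 1) * I := by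
      have hstep : ∀ z : M, r x / (L + 1) ≤ d0 x z + d1 z y + r z := by
        intro z
        rw [div_le_iff₀ hLpos]
        have habs := (abs_le.1 (hrL x z)).2
        have h2 : L * min (d0 x z) (d1 x z) ≤ L * d0 x z :=
          mul_le_mul_of_nonneg_left (min_le_left _ _) hL.le
        have h3 : 0 ≤ L * d1 z y := mul_nonneg hL.le (hd1nn z y)
        have h4 : 0 ≤ L * r z := mul_nonneg hL.le (hr z).le
        have h5 := hd0nn x z
        have h6 := hd1nn z y
        have h7 := (hr z).le
        nlinarith
      have hle : r x / (L + 1) ≤ I := le_ciInf hstep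
      have := (div_le_iff₀ hLpos).1 hle
      linarith
    have hry : r y ≤ (L + 1) * I := by
      have hstep : ∀ z : M, r y / (L + 1) ≤ d0 x z + d1 z y + r z := by
        intro z
        rw [div_le_iff₀ hLpos]
        have habs := (abs_le.1 (hrL z y)).1
        have h2 : L * min (d0 z y) (d1 z y) ≤ L * d1 z y :=
          mul_le_mul_of_nonneg_left (min_le_right _ _) hL.le
        have h3 : 0 ≤ L * d0 x z := mul_nonneg hL.le (hd0nn x z)
        have h4 : 0 ≤ L * r z := mul_nonneg hL.le (hr z).le
        have h5 := hd0nn x z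
        have h6 := hd1nn z y
        have h7 := (hr z).le
        nlinarith
      have hle : r y / (L + 1) ≤ I := le_ciInf hstep
      have := (div_le_iff₀ hLpos).1 hle
      linarith
    have hh : min (d0 x y) (d1 x y) ≤ I + r y := by
      have hstep : ∀ z : M, min (d0 x y) (d1 x y) - r y ≤ d0 x z + d1 z y + r z := by
        intro z
        have habs := (abs_le.1 (hdd z y)).2
        have htri := hm0tri x z y
        have hmin := min_le_left (d0 x y) (d1 x y)
        linarith
      linarith [le_ciInf hstep]
    have hN := hnorm (x, false) (y, true)
    simp only [hB0, hB1, hu1, hu2, cond_true, cond_false] at hN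
    rw [sub_zero, zero_sub, abs_neg, abs_of_pos (hr x), abs_of_pos (hr y)] at hN
    obtain ⟨lh, uh⟩ := hΨh x y
    obtain ⟨-, u0⟩ := hΨ0 x xs
    obtain ⟨-, u1'⟩ := hΨ1 xs y
    simp only at lh uh u0 u1'
    have hu0' : ‖Ψ0 x - Ψ0 xs‖ ≤ C0 * (2 * r x) := by
      refine u0.trans (mul_le_mul_of_nonneg_left ?_ hC0n)
      have := min_le_right (d0 x xs) (r x + r xs)
      linarith [hxs x]
    have hu1'' : ‖Ψ1 xs - Ψ1 y‖ ≤ C1 * (2 * r y) := by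
      refine u1'.trans (mul_le_mul_of_nonneg_left ?_ hC1n)
      have := min_le_right (d1 xs y) (r xs + r y)
      linarith [hxs y]
    constructor
    · rw [hN]
      have := norm_nonneg (Ψ0 x - Ψ0 xs)
      have := norm_nonneg (Ψ1 xs - Ψ1 y)
      linarith
    · rw [hN]
      have m1 : ‖Ψh x - Ψh y‖ ≤ C2 * (I + r y) :=
        uh.trans (mul_le_mul_of_nonneg_left hh hC2n)
      have m2 : C2 * (I + r y) ≤ C2 * (I + (L+1) * I) :=
        mul_le_mul_of_nonneg_left (by linarith) hC2n
      have m3 : C0 * (2 * r x) ≤ C0 * (2 * ((L+1) * I)) :=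
        mul_le_mul_of_nonneg_left (by linarith) hC0n
      have m4 : C1 * (2 * r y) ≤ C1 * (2 * ((L+1) * I)) :=
        mul_le_mul_of_nonneg_left (by linarith) hC1n
      have m5 : (C2*(L+2) + (2*C0+1)*(L+1) + (2*C1+1)*(L+1)) * I ≤ D * I :=
        mul_le_mul_of_nonneg_right hD3 hInn
      nlinarith [m1, m2, m3, m4, m5, hu0', hu1'', hrx, hry]
  refine ⟨ΩC, mC, νC, Φ, ?_⟩
  rintro ⟨x, ε⟩ ⟨y, δ⟩
  cases ε <;> cases δ
  · -- false, false
    have hN := hnorm (x, false) (y, false)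
    simp only [hB0, hB1, hu1, hu2, cond_false] at hN
    rw [sub_self, norm_zero, sub_self, abs_zero] at hN
    obtain ⟨lh, uh⟩ := hΨh x y
    obtain ⟨l0, u0⟩ := hΨ0 x y
    simp only at lh uh l0 u0
    have hdec : d0 x y ≤ min (d0 x y) (r x + r y) + min (d0 x y) (d1 x y) := by
      rcases le_total (d0 x y) (r x + r y) with hc | hc
      · rw [min_eq_left hc]
        have : 0 ≤ min (d0 x y) (d1 x y) := le_min (hd0nn x y) (hd1nn x y)
        linarith
      · rw [min_eq_right hc]
        have habs := (abs_le.1 (hdd x y)).2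
        have : d0 x y - (r x + r y) ≤ min (d0 x y) (d1 x y) := by
          refine le_min (by linarith [(hr x).le, (hr y).le]) (by linarith)
        linarith
    have hrabs : |r x - r y| ≤ L * d0 x y :=
      (hrL x y).trans (mul_le_mul_of_nonneg_left (min_le_left _ _) hL.le)
    have hmind0 : min (d0 x y) (d1 x y) ≤ d0 x y := min_le_left _ _
    have hming0 : min (d0 x y) (r x + r y) ≤ d0 x y := min_le_left _ _
    have hu2' : ‖Ψh x - Ψh y‖ ≤ C2 * d0 x y :=
      uh.trans (mul_le_mul_of_nonneg_left hmind0 hC2n)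
    have hu0' : ‖Ψ0 x - Ψ0 y‖ ≤ C0 * d0 x y :=
      u0.trans (mul_le_mul_of_nonneg_left hming0 hC0n)
    have hDd : (C0 + C2 + L) * d0 x y ≤ D * d0 x y :=
      mul_le_mul_of_nonneg_right hD1 (hd0nn x y)
    simp only [twistedDist]
    constructor
    · rw [hN]
      linarith [abs_nonneg (r x - r y)]
    · rw [hN]
      linarith
  · -- false, true
    simpa only [twistedDist] using cross x y
  · -- true, false
    have h := cross y x
    rw [norm_sub_rev] at h
    simpa only [twistedDist] using h
  · -- true, true
    have hN := hnorm (x, true) (y, true)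
    simp only [hB0, hB1, hu1, hu2, cond_true] at hN
    rw [sub_self, norm_zero, sub_self, abs_zero] at hN
    obtain ⟨lh, uh⟩ := hΨh x y
    obtain ⟨l1, u1'⟩ := hΨ1 x y
    simp only at lh uh l1 u1'
    have hdec : d1 x y ≤ min (d1 x y) (r x + r y) + min (d0 x y) (d1 x y) := by
      rcases le_total (d1 x y) (r x + r y) with hc | hc
      · rw [min_eq_left hc]
        have : 0 ≤ min (d0 x y) (d1 x y) := le_min (hd0nn x y) (hd1nn x y)
        linarith
      · rw [min_eq_right hc]
        have habs := (abs_le.1 (hdd x y)).1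
        have : d1 x y - (r x + r y) ≤ min (d0 x y) (d1 x y) := by
          refine le_min (by linarith) (by linarith [(hr x).le, (hr y).le])
        linarith
    have hrabs : |r x - r y| ≤ L * d1 x y :=
      (hrL x y).trans (mul_le_mul_of_nonneg_left (min_le_right _ _) hL.le)
    have hmind1 : min (d0 x y) (d1 x y) ≤ d1 x y := min_le_right _ _
    have hming1 : min (d1 x y) (r x + r y) ≤ d1 x y := min_le_left _ _
    have hu2' : ‖Ψh x - Ψh y‖ ≤ C2 * d1 x y :=
      uh.trans (mul_le_mul_of_nonneg_left hmind1 hC2n)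
    have hu1'' : ‖Ψ1 x - Ψ1 y‖ ≤ C1 * d1 x y :=
      u1'.trans (mul_le_mul_of_nonneg_left hming1 hC1n)
    have hDd : (C1 + C2 + L) * d1 x y ≤ D * d1 x y :=
      mul_le_mul_of_nonneg_right hD2 (hd1nn x y)
    simp only [twistedDist]
    constructor
    · rw [hN]
      linarith [abs_nonneg (r x - r y)]
    · rw [hN]
      linarith
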